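/- Let n be a natural number and let m satisfy 3 ≤ m ≤ n. If m < n, then the cycle sum s_m lies in the ℚ-subalgebra of ℚ[S_n] generated by {s_i : 1 ≤ i < m} ∪ {s_{(m−1,2)}}. If m = n, then s_n lies in the ℚ-subalgebra of ℚ[S_n] generated by {s_i : 1 ≤ i < n}. -/

import Mathlib

/-- `classSum n m` is the sum, in the group algebra `ℚ[Sₙ]`, of all permutations
whose cycle type is the multiset `m` (parts of size 1 being suppressed, as in
Mathlib's `Equiv.Perm.cycleType`). -/
noncomputable def classSum (n : ℕ) (m : Multiset ℕ) : MonoidAlgebra ℚ (Equiv.Perm (Fin n)) :=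
  ∑ σ ∈ Finset.univ.filter (fun σ : Equiv.Perm (Fin n) => σ.cycleType = m),
    MonoidAlgebra.single σ (1 : ℚ)

/-- The cycle sum `sᵢ`: the sum of all `i`-cycles in `Sₙ` for `i ≥ 2`, and the
identity of `ℚ[Sₙ]` for `i ≤ 1`. -/
noncomputable def cycleSum (n i : ℕ) : MonoidAlgebra ℚ (Equiv.Perm (Fin n)) :=
  if i < 2 then 1 else classSum n {i}


open Equiv Equiv.Perm Finset

instance coeFunMA {n : ℕ} :
    CoeFun (MonoidAlgebra ℚ (Equiv.Perm (Fin n))) (fun _ => Equiv.Perm (Fin n) → ℚ) :=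
  ⟨fun x => x.coeff⟩

lemma classSum_apply (n : ℕ) (ν : Multiset ℕ) (σ : Equiv.Perm (Fin n)) :
    classSum n ν σ = if σ.cycleType = ν then 1 else 0 := by
  classical
  unfold classSum
  rw [MonoidAlgebra.coeff_sum, Finset.sum_apply']
  simp_rw [MonoidAlgebra.coeff_single, Finsupp.single_apply]
  rw [Finset.sum_ite_eq' _ σ (fun _ => (1:ℚ))]
  simp

def ClassInv {n : ℕ} (x : MonoidAlgebra ℚ (Equiv.Perm (Fin n))) : Prop :=
  ∀ σ τ : Equiv.Perm (Fin n), σ.cycleType = τ.cycleType → x σ = x τ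

lemma classInv_classSum (n : ℕ) (ν : Multiset ℕ) : ClassInv (classSum n ν) := by
  intro σ τ h
  rw [classSum_apply, classSum_apply, h]

lemma classInv_mapDomain_conj {n : ℕ} {x : MonoidAlgebra ℚ (Equiv.Perm (Fin n))}
    (hx : ClassInv x) (g : Equiv.Perm (Fin n)) :
    MonoidAlgebra.mapDomain (MulAut.conj g) x = x := by
  ext a
  show Finsupp.mapDomain _ _ _ = _
  rw [show ((MulAut.conj g : Equiv.Perm (Fin n) → Equiv.Perm (Fin n))) =
    ((MulAut.conj g).toEquiv : Equiv.Perm (Fin n) → Equiv.Perm (Fin n)) from rfl]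
  rw [Finsupp.mapDomain_equiv_apply]
  apply hx
  show ((MulAut.conj g).symm a).cycleType = _
  simp only [MulAut.conj_symm_apply]
  exact Equiv.Perm.cycleType_conj

lemma ClassInv.mul {n : ℕ} {x y : MonoidAlgebra ℚ (Equiv.Perm (Fin n))}
    (hx : ClassInv x) (hy : ClassInv y) : ClassInv (x * y) := by
  intro σ τ h
  obtain ⟨g, hg⟩ := isConj_iff.mp (Equiv.Perm.isConj_iff_cycleType_eq.mpr h)
  have key : MonoidAlgebra.mapDomain (MulAut.conj g) (x * y) = x * y := by
    rw [MonoidAlgebra.mapDomain_mul (MulAut.conj g), classInv_mapDomain_conj hx,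
      classInv_mapDomain_conj hy]
  have h2 : (x * y) τ = (MonoidAlgebra.mapDomain (MulAut.conj g) (x*y)) τ := by rw [key]
  rw [h2]
  show _ = Finsupp.mapDomain _ _ _
  rw [show ((MulAut.conj g : Equiv.Perm (Fin n) → Equiv.Perm (Fin n))) =
    ((MulAut.conj g).toEquiv : Equiv.Perm (Fin n) → Equiv.Perm (Fin n)) from rfl]
  rw [Finsupp.mapDomain_equiv_apply]
  congr 1
  show σ = (MulAut.conj g).symm τ
  rw [MulAut.conj_symm_apply, ← hg]
  group

lemma sub_apply' {n : ℕ} (x y : MonoidAlgebra ℚ (Equiv.Perm (Fin n))) (τ : Equiv.Perm (Fin n)) :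
    (x - y) τ = x τ - y τ := Finsupp.sub_apply x.coeff y.coeff τ

lemma smul_apply' {n : ℕ} (c : ℚ) (x : MonoidAlgebra ℚ (Equiv.Perm (Fin n))) (τ : Equiv.Perm (Fin n)) :
    (c • x) τ = c * x τ := Finsupp.smul_apply c x.coeff τ

lemma classInv_mem {n : ℕ} (S : Subalgebra ℚ (MonoidAlgebra ℚ (Equiv.Perm (Fin n))))
    (x : MonoidAlgebra ℚ (Equiv.Perm (Fin n))) (hx : ClassInv x)
    (h : ∀ σ, x σ ≠ 0 → classSum n σ.cycleType ∈ S) : x ∈ S := by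
  classical
  generalize hc : x.coeff.support.card = c
  induction c using Nat.strong_induction_on generalizing x with
  | _ c IH =>
  subst hc
  rcases eq_or_ne x 0 with rfl | hx0
  · exact S.zero_mem
  obtain ⟨σ, hσ⟩ := Finsupp.support_nonempty_iff.mpr (fun h => hx0 (MonoidAlgebra.coeff_injective h))
  set y := x - x σ • classSum n σ.cycleType with hy
  have hyapp : ∀ τ : Equiv.Perm (Fin n),
      y τ = if τ.cycleType = σ.cycleType then 0 else x τ := by
    intro τ
    rw [hy, sub_apply', smul_apply', classSum_apply]
    split_ifs with hτ
    · rw [hx τ σ hτ]; ring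
    · ring
  have hysupp : y.coeff.support ⊂ x.coeff.support := by
    constructor
    · intro τ hτ
      rw [Finsupp.mem_support_iff] at hτ ⊢
      rw [hyapp τ] at hτ
      split_ifs at hτ with h'
      · exact absurd rfl hτ
      · exact hτ
    · intro hss
      have := hss hσ
      rw [Finsupp.mem_support_iff, hyapp σ, if_pos rfl] at this
      exact this rfl
  have hyinv : ClassInv y := by
    intro τ₁ τ₂ h12
    rw [hyapp, hyapp, h12]
    split_ifs with h'
    · rfl
    · exact hx τ₁ τ₂ h12
  have hymem : y ∈ S := by
    refine IH y.coeff.support.card (Finset.card_lt_card hysupp) y hyinv ?_ rfl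
    intro τ hτ
    rw [hyapp τ] at hτ
    split_ifs at hτ with h'
    · exact absurd rfl hτ
    · exact h τ hτ
  have hxσ : x σ ≠ 0 := Finsupp.mem_support_iff.mp hσ
  have : x = y + x σ • classSum n σ.cycleType := by rw [hy]; abel
  rw [this]
  exact S.add_mem hymem (S.smul_mem (h σ hxσ) _)

lemma classSum_mul_apply (n : ℕ) (l u : Multiset ℕ) (π : Equiv.Perm (Fin n)) :
    (classSum n l * classSum n u) π =
      ∑ α ∈ Finset.univ.filter (fun σ : Equiv.Perm (Fin n) => σ.cycleType = l),
        ∑ ρ ∈ Finset.univ.filter (fun σ : Equiv.Perm (Fin n) => σ.cycleType = u),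
          (if α * ρ = π then (1:ℚ) else 0) := by
  classical
  unfold classSum
  rw [Finset.sum_mul_sum]
  rw [MonoidAlgebra.coeff_sum, Finset.sum_apply']
  refine Finset.sum_congr rfl fun α _ => ?_
  rw [MonoidAlgebra.coeff_sum, Finset.sum_apply']
  refine Finset.sum_congr rfl fun ρ _ => ?_
  rw [MonoidAlgebra.single_mul_single, one_mul, MonoidAlgebra.coeff_single, Finsupp.single_apply]

lemma classSum_mul_ne_zero {n : ℕ} {l u : Multiset ℕ} {π : Equiv.Perm (Fin n)}
    (h : (classSum n l * classSum n u) π ≠ 0) :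
    ∃ α ρ : Equiv.Perm (Fin n), α.cycleType = l ∧ ρ.cycleType = u ∧ α * ρ = π := by
  classical
  by_contra hc
  push_neg at hc
  apply h
  rw [classSum_mul_apply]
  refine Finset.sum_eq_zero fun α hα => Finset.sum_eq_zero fun ρ hρ => ?_
  simp only [Finset.mem_filter, Finset.mem_univ, true_and] at hα hρ
  rw [if_neg (hc α ρ hα hρ)]

lemma classSum_mul_pos {n : ℕ} {l u : Multiset ℕ} {π α ρ : Equiv.Perm (Fin n)}
    (hα : α.cycleType = l) (hρ : ρ.cycleType = u) (hπ : α * ρ = π) :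
    (classSum n l * classSum n u) π ≠ 0 := by
  classical
  rw [classSum_mul_apply]
  have : (0:ℚ) < ∑ α' ∈ Finset.univ.filter (fun σ : Equiv.Perm (Fin n) => σ.cycleType = l),
      ∑ ρ' ∈ Finset.univ.filter (fun σ : Equiv.Perm (Fin n) => σ.cycleType = u),
        (if α' * ρ' = π then (1:ℚ) else 0) := by
    refine Finset.sum_pos' (fun a _ => Finset.sum_nonneg fun b _ => by positivity) ?_
    refine ⟨α, by simp [hα], ?_⟩
    refine Finset.sum_pos' (fun b _ => by positivity) ⟨ρ, by simp [hρ], by rw [if_pos hπ]; norm_num⟩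
  exact ne_of_gt this

lemma ClassInv.sub {n : ℕ} {x y : MonoidAlgebra ℚ (Equiv.Perm (Fin n))}
    (hx : ClassInv x) (hy : ClassInv y) : ClassInv (x - y) := by
  intro σ τ h
  rw [sub_apply', sub_apply', hx σ τ h, hy σ τ h]

lemma ClassInv.smul {n : ℕ} {x : MonoidAlgebra ℚ (Equiv.Perm (Fin n))} (c : ℚ)
    (hx : ClassInv x) : ClassInv (c • x) := by
  intro σ τ h
  rw [smul_apply', smul_apply', hx σ τ h]

lemma classSum_eq_zero {n : ℕ} {ν : Multiset ℕ}
    (h : ∀ σ : Equiv.Perm (Fin n), σ.cycleType ≠ ν) : classSum n ν = 0 := by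
  unfold classSum
  rw [Finset.filter_false_of_mem (fun σ _ => h σ), Finset.sum_empty]

lemma classSum_zero (n : ℕ) : classSum n 0 = 1 := by
  classical
  unfold classSum
  rw [show Finset.univ.filter (fun σ : Equiv.Perm (Fin n) => σ.cycleType = 0) = {1} by
    ext σ; simp [Equiv.Perm.cycleType_eq_zero]]
  rw [Finset.sum_singleton, MonoidAlgebra.one_def]

lemma mul_cycleType_sum_le {n : ℕ} {α β : Equiv.Perm (Fin n)}
    (h : ¬ Equiv.Perm.Disjoint α β) :
    (α*β).cycleType.sum + 1 ≤ α.cycleType.sum + β.cycleType.sum := by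
  rw [Equiv.Perm.sum_cycleType, Equiv.Perm.sum_cycleType, Equiv.Perm.sum_cycleType]
  have h1 : (α*β).support ⊆ α.support ∪ β.support := Equiv.Perm.support_mul_le α β
  have h2 : (α.support ∩ β.support).Nonempty :=
    Finset.not_disjoint_iff_nonempty_inter.mp
      (fun hd => h ((Equiv.Perm.disjoint_iff_disjoint_support).mpr hd))
  calc (α*β).support.card + 1
      ≤ (α.support ∪ β.support).card + (α.support ∩ β.support).card :=
        add_le_add (Finset.card_le_card h1) h2.card_pos
    _ = α.support.card + β.support.card := Finset.card_union_add_card_inter _ _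

lemma exists_cycle_factor {n : ℕ} {π : Equiv.Perm (Fin n)} {a : ℕ} (ha : a ∈ π.cycleType) :
    ∃ c ρ : Equiv.Perm (Fin n), c.cycleType = {a} ∧ ρ.cycleType = π.cycleType.erase a ∧
      Equiv.Perm.Disjoint c ρ ∧ c * ρ = π := by
  rw [Equiv.Perm.cycleType_def, Multiset.mem_map] at ha
  obtain ⟨c, hc, hca⟩ := ha
  rw [Finset.mem_val] at hc
  obtain ⟨hcyc, hagree⟩ := Equiv.Perm.mem_cycleFactorsFinset_iff.mp hc
  refine ⟨c, c⁻¹ * π, ?_, ?_, ?_, by group⟩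
  · rw [hcyc.cycleType]
    simp only [Function.comp_apply] at hca
    rw [hca]
  · have hd : Equiv.Perm.Disjoint c (c⁻¹ * π) := by
      intro x
      by_cases hx : c x = x
      · exact Or.inl hx
      · right
        have : c x = π x := hagree x (Equiv.Perm.mem_support.mpr hx)
        rw [Equiv.Perm.mul_apply, ← this, ← Equiv.Perm.mul_apply, inv_mul_cancel, Equiv.Perm.one_apply]
    have := hd.cycleType_mul
    rw [show c * (c⁻¹ * π) = π by group] at this
    rw [hcyc.cycleType] at this
    simp only [Function.comp_apply] at hca
    rw [hca] at this
    have : π.cycleType = a ::ₘ (c⁻¹ * π).cycleType := by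
      rw [this]; rfl
    rw [this, Multiset.erase_cons_head]
  · intro x
    by_cases hx : c x = x
    · exact Or.inl hx
    · right
      have : c x = π x := hagree x (Equiv.Perm.mem_support.mpr hx)
      rw [Equiv.Perm.mul_apply, ← this, ← Equiv.Perm.mul_apply, inv_mul_cancel, Equiv.Perm.one_apply]

def genSet (n m : ℕ) : Set (MonoidAlgebra ℚ (Equiv.Perm (Fin n))) :=
  {x | ∃ i, 1 ≤ i ∧ i < m ∧ x = cycleSum n i}

lemma classSum_singleton_mem {n m a : ℕ} (h2 : 2 ≤ a) (ham : a < m) :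
    classSum n {a} ∈ Algebra.adjoin ℚ (genSet n m) := by
  have : classSum n {a} = cycleSum n a := by
    unfold cycleSum
    rw [if_neg (by omega)]
  rw [this]
  exact Algebra.subset_adjoin ⟨a, by omega, ham, rfl⟩

lemma lemmaL {n m : ℕ} (h3 : 3 ≤ m) : ∀ s : ℕ, ∀ ν : Multiset ℕ, ν.sum = s →
    ν.sum ≤ m → ν ≠ {m} → classSum n ν ∈ Algebra.adjoin ℚ (genSet n m) := by
  intro s
  induction s using Nat.strong_induction_on with
  | _ s IH =>
  intro ν hs hsm hne
  by_cases hex : ∃ π : Equiv.Perm (Fin n), π.cycleType = ν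
  swap
  · push_neg at hex
    rw [classSum_eq_zero hex]
    exact Subalgebra.zero_mem _
  obtain ⟨π, hπ⟩ := hex
  rcases Multiset.empty_or_exists_mem ν with hν0 | ⟨a, haν⟩
  · rw [hν0, classSum_zero]
    exact Subalgebra.one_mem _
  have ha2 : 2 ≤ a := Equiv.Perm.two_le_of_mem_cycleType (by rwa [hπ])
  by_cases hcard : ν = {a}
  · subst hcard
    have : a = s := by simpa using hs
    refine classSum_singleton_mem ha2 ?_
    have : a ≠ m := fun h => hne (by rw [h])
    omega
  -- ν has at least two parts
  set μ := ν.erase a with hμ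
  have hcons : ν = a ::ₘ μ := (Multiset.cons_erase haν).symm
  have hμne : μ ≠ 0 := by
    intro h0
    exact hcard (by rw [hcons, h0]; rfl)
  obtain ⟨b, hbμ⟩ := Multiset.exists_mem_of_ne_zero hμne
  have hb2 : 2 ≤ b := Equiv.Perm.two_le_of_mem_cycleType
    (by rw [hπ, hcons]; exact Multiset.mem_cons_of_mem hbμ)
  have hμsum2 : 2 ≤ μ.sum := le_trans hb2 (Multiset.le_sum_of_mem hbμ)
  have hνsum : ν.sum = a + μ.sum := by rw [hcons, Multiset.sum_cons]
  have hssum : s = a + μ.sum := by rw [← hs, hνsum]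
  -- get a factorization of π
  obtain ⟨c, ρ, hct, hρt, hdisj, hmul⟩ := exists_cycle_factor (a := a) (by rwa [hπ])
  rw [hπ, ← hμ] at hρt
  set x := classSum n {a} * classSum n μ with hx
  have hxmem : x ∈ Algebra.adjoin ℚ (genSet n m) := by
    refine Subalgebra.mul_mem _ (classSum_singleton_mem ha2 (by omega)) ?_
    refine IH μ.sum (by omega) μ rfl (by omega) ?_
    intro h
    have hmm : μ.sum = m := by rw [h]; simp
    omega
  have hxπ : x π ≠ 0 := classSum_mul_pos hct hρt hmul
  have hxinv : ClassInv x := (classInv_classSum n {a}).mul (classInv_classSum n μ)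
  set y := x - x π • classSum n ν with hy
  have hyinv : ClassInv y := hxinv.sub ((classInv_classSum n ν).smul (x π))
  have hymem : y ∈ Algebra.adjoin ℚ (genSet n m) := by
    refine classInv_mem _ y hyinv ?_
    intro σ hσ
    have hyσ : y σ = x σ - x π * (if σ.cycleType = ν then (1:ℚ) else 0) := by
      rw [hy, sub_apply', smul_apply', classSum_apply]
    by_cases htype : σ.cycleType = ν
    · exfalso
      rw [hyσ, if_pos htype, mul_one, hxinv σ π (by rw [htype, hπ]), sub_self] at hσ
      exact hσ rfl
    · rw [hyσ, if_neg htype, mul_zero, sub_zero] at hσ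
      obtain ⟨α, β, hαt, hβt, hαβ⟩ := classSum_mul_ne_zero hσ
      have hnd : ¬ Equiv.Perm.Disjoint α β := by
        intro hd
        apply htype
        rw [← hαβ, hd.cycleType_mul, hαt, hβt, Multiset.singleton_add, ← hcons]
      have hbound := mul_cycleType_sum_le hnd
      rw [hαβ, hαt, hβt] at hbound
      simp only [Multiset.sum_singleton] at hbound
      refine IH σ.cycleType.sum (by omega) _ rfl (by omega) ?_
      intro h
      have hmm : σ.cycleType.sum = m := by rw [h]; simp
      omega
  have hfinal : classSum n ν = (x π)⁻¹ • (x - y) := by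
    rw [hy]
    rw [show x - (x - x π • classSum n ν) = x π • classSum n ν by abel]
    rw [smul_smul, inv_mul_cancel₀ hxπ, one_smul]
  rw [hfinal]
  exact Subalgebra.smul_mem _ (Subalgebra.sub_mem _ hxmem hymem) _

lemma exists_mcycle_factor {n m : ℕ} (h3 : 3 ≤ m) {π : Equiv.Perm (Fin n)}
    (hπ : π.cycleType = {m}) :
    ∃ α τ : Equiv.Perm (Fin n), α.cycleType = {m-1} ∧ τ.cycleType = {2} ∧ α * τ = π := by
  have hcyc : π.IsCycle := Equiv.Perm.card_cycleType_eq_one.mp (by rw [hπ]; rfl)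
  have hcard : π.support.card = m := by
    rw [← Equiv.Perm.sum_cycleType, hπ, Multiset.sum_singleton]
  have hsupp : π.support.Nonempty := by
    rw [← Finset.card_pos, hcard]; omega
  obtain ⟨u, hu⟩ := hsupp
  have hu' : π u ≠ u := Equiv.Perm.mem_support.mp hu
  set x := π u with hxdef
  have hx : π x ≠ x := by
    have : x ∈ π.support := Equiv.Perm.apply_mem_support.mpr hu
    exact Equiv.Perm.mem_support.mp this
  have horder : orderOf π = m := by rw [hcyc.orderOf, hcard]
  have hsq : π ^ 2 ≠ 1 := by
    intro h
    have := orderOf_dvd_of_pow_eq_one h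
    rw [horder] at this
    have := Nat.le_of_dvd (by norm_num) this
    omega
  have hffx : π (π x) ≠ x := by
    intro h
    apply hsq
    rw [(hcyc.pow_eq_one_iff' hx : π ^ 2 = 1 ↔ (π ^ 2) x = x)]
    rw [pow_two, Equiv.Perm.mul_apply, h]
  set α := Equiv.swap x (π x) * π with hα
  have hαcyc : α.IsCycle := hcyc.swap_mul hx hffx
  have hαsupp : α.support = π.support \ {x} := Equiv.Perm.support_swap_mul_eq π x hffx
  have hαcard : α.support.card = m - 1 := by
    rw [hαsupp, Finset.card_sdiff_of_subset
      (Finset.singleton_subset_iff.mpr (Equiv.Perm.mem_support.mpr hx)),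
      Finset.card_singleton, hcard]
  have hαt : α.cycleType = {m-1} := by
    rw [hαcyc.cycleType, hαcard]
  set τ := Equiv.swap u (π u) with hτ
  have hτt : τ.cycleType = {2} := by
    have hc : τ.IsCycle := Equiv.Perm.isCycle_swap (Ne.symm hu')
    rw [hc.cycleType, Equiv.Perm.support_swap (Ne.symm hu'),
      Finset.card_insert_of_notMem (by simpa using Ne.symm hu'), Finset.card_singleton]
  refine ⟨α, τ, hαt, hτt, ?_⟩
  have key : α = π * τ := by
    rw [hα, hτ, hxdef, Equiv.swap_apply_apply π u (π u)]
    group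
  rw [key, hτ, mul_assoc, Equiv.swap_mul_self, mul_one]

lemma cycleType_sum_le (n : ℕ) (σ : Equiv.Perm (Fin n)) : σ.cycleType.sum ≤ n := by
  rw [Equiv.Perm.sum_cycleType]
  calc σ.support.card ≤ Finset.univ.card := Finset.card_le_univ _
    _ = n := by simp

lemma mainLemma {n m : ℕ} (h3 : 3 ≤ m) (hmn : m ≤ n) :
    classSum n {m} ∈ Algebra.adjoin ℚ (genSet n m ∪ {classSum n ({m-1, 2} : Multiset ℕ)}) := by
  classical
  set A := Algebra.adjoin ℚ (genSet n m ∪ {classSum n ({m-1, 2} : Multiset ℕ)}) with hA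
  have hA0 : Algebra.adjoin ℚ (genSet n m) ≤ A :=
    Algebra.adjoin_mono Set.subset_union_left
  by_cases hex : ∃ π : Equiv.Perm (Fin n), π.cycleType = ({m} : Multiset ℕ)
  swap
  · push_neg at hex
    rw [classSum_eq_zero hex]
    exact Subalgebra.zero_mem _
  obtain ⟨π, hπ⟩ := hex
  have hsumne : ({m} : Multiset ℕ) ≠ ({m-1, 2} : Multiset ℕ) := by
    intro h
    have := congrArg Multiset.sum h
    simp only [Multiset.sum_singleton, Multiset.insert_eq_cons, Multiset.sum_cons,
      Multiset.sum_singleton] at this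
    omega
  set x := classSum n {m-1} * classSum n {2} with hx
  have hxmem : x ∈ A := by
    refine Subalgebra.mul_mem _ (hA0 (classSum_singleton_mem (by omega) (by omega)))
      (hA0 (classSum_singleton_mem (by omega) (by omega)))
  obtain ⟨α₀, τ₀, hα₀, hτ₀, hmul₀⟩ := exists_mcycle_factor h3 hπ
  have hxπ : x π ≠ 0 := classSum_mul_pos hα₀ hτ₀ hmul₀
  have hxinv : ClassInv x := (classInv_classSum n {m-1}).mul (classInv_classSum n {2})
  set d : ℚ := if h : ∃ σ : Equiv.Perm (Fin n), σ.cycleType = ({m-1, 2} : Multiset ℕ)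
    then x h.choose else 0 with hd
  set y := x - x π • classSum n {m} - d • classSum n ({m-1, 2} : Multiset ℕ) with hy
  have hyinv : ClassInv y :=
    (hxinv.sub ((classInv_classSum n {m}).smul (x π))).sub
      ((classInv_classSum n ({m-1, 2} : Multiset ℕ)).smul d)
  have hyapp : ∀ σ : Equiv.Perm (Fin n), y σ =
      x σ - x π * (if σ.cycleType = ({m} : Multiset ℕ) then 1 else 0)
        - d * (if σ.cycleType = ({m-1, 2} : Multiset ℕ) then 1 else 0) := by
    intro σ
    rw [hy, sub_apply', sub_apply', smul_apply', smul_apply', classSum_apply, classSum_apply]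
  have hymem : y ∈ A := by
    refine classInv_mem _ y hyinv ?_
    intro σ hσ
    by_cases h1 : σ.cycleType = ({m} : Multiset ℕ)
    · exfalso
      rw [hyapp σ, if_pos h1, if_neg (by rw [h1]; exact hsumne), mul_one, mul_zero,
        sub_zero, hxinv σ π (by rw [h1, hπ]), sub_self] at hσ
      exact hσ rfl
    by_cases h2 : σ.cycleType = ({m-1, 2} : Multiset ℕ)
    · exfalso
      have hexd : ∃ σ' : Equiv.Perm (Fin n), σ'.cycleType = ({m-1, 2} : Multiset ℕ) := ⟨σ, h2⟩
      rw [hyapp σ, if_pos h2, if_neg h1, mul_one, mul_zero, sub_zero, hd, dif_pos hexd,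
        hxinv σ hexd.choose (by rw [h2, hexd.choose_spec]), sub_self] at hσ
      exact hσ rfl
    rw [hyapp σ, if_neg h1, if_neg h2, mul_zero, mul_zero, sub_zero, sub_zero] at hσ
    obtain ⟨α, β, hαt, hβt, hαβ⟩ := classSum_mul_ne_zero hσ
    have hnd : ¬ Equiv.Perm.Disjoint α β := by
      intro hdj
      apply h2
      rw [← hαβ, hdj.cycleType_mul, hαt, hβt]
      rfl
    have hbound := mul_cycleType_sum_le hnd
    rw [hαβ, hαt, hβt] at hbound
    simp only [Multiset.sum_singleton] at hbound
    refine hA0 (lemmaL h3 σ.cycleType.sum _ rfl (by omega) h1)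
  have hfinal : classSum n ({m} : Multiset ℕ) =
      (x π)⁻¹ • (x - y - d • classSum n ({m-1, 2} : Multiset ℕ)) := by
    rw [hy]
    rw [show x - (x - x π • classSum n {m} - d • classSum n ({m-1, 2} : Multiset ℕ))
        - d • classSum n ({m-1, 2} : Multiset ℕ) = x π • classSum n {m} by abel]
    rw [smul_smul, inv_mul_cancel₀ hxπ, one_smul]
  rw [hfinal]
  refine Subalgebra.smul_mem _ (Subalgebra.sub_mem _ (Subalgebra.sub_mem _ hxmem hymem) ?_) _
  exact Subalgebra.smul_mem _
    (Algebra.subset_adjoin (Set.mem_union_right _ (Set.mem_singleton _))) _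


/-- For `3 ≤ m ≤ n`: if `m < n` then the cycle sum `s_m` lies
in the ℚ-subalgebra of `ℚ[Sₙ]` generated by `{sᵢ : 1 ≤ i < m}` together with
`s_{(m−1,2)}`; if `m = n` then `s_n` lies in the ℚ-subalgebra generated by
`{sᵢ : 1 ≤ i < n}`. -/
theorem cycleSum_mem_adjoin (n m : ℕ) (h3 : 3 ≤ m) (hmn : m ≤ n) :
    (m < n → classSum n {m} ∈ Algebra.adjoin ℚ
        ({x : MonoidAlgebra ℚ (Equiv.Perm (Fin n)) |
            ∃ i, 1 ≤ i ∧ i < m ∧ x = cycleSum n i} ∪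
          {classSum n {m - 1, 2}})) ∧
    (m = n → classSum n {n} ∈ Algebra.adjoin ℚ
        {x : MonoidAlgebra ℚ (Equiv.Perm (Fin n)) |
          ∃ i, 1 ≤ i ∧ i < n ∧ x = cycleSum n i}) := by
  constructor
  · intro _
    exact mainLemma h3 hmn
  · intro h
    subst h
    have h0 : classSum m ({m - 1, 2} : Multiset ℕ) = 0 := by
      refine classSum_eq_zero fun σ hσ => ?_
      have h1 := cycleType_sum_le m σ
      rw [hσ] at h1
      simp only [Multiset.insert_eq_cons, Multiset.sum_cons, Multiset.sum_singleton] at h1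
      omega
    have := mainLemma h3 hmn
    rw [h0] at this
    refine Algebra.adjoin_le ?_ this
    rintro x (hx | hx)
    · exact Algebra.subset_adjoin hx
    · rw [Set.mem_singleton_iff] at hx
      subst hx
      exact Subalgebra.zero_mem _
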